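/- arXiv:0804.2543 — 3 statements merged into one kernel-verified Lean document; each statement's English description precedes it below -/
import Mathlib

section
/- For every integer n ≥ 1, √(e/π) ≤ n^{n/2} / (Γ((n+1)/2) · (√(2e))^{n-1}) ≤ 1, with the upper bound attained at n = 1. -/
open Real Filter Topology


lemma log_le_poly5 {x : ℝ} (hx : 0 ≤ x) :
    Real.log (1 + x) ≤ x - x^2/2 + x^3/3 - x^4/4 + x^5/5 := by
  set f : ℝ → ℝ := fun y => y - y^2/2 + y^3/3 - y^4/4 + y^5/5 - Real.log (1+y) with hf
  have key : ∀ y ∈ Set.Ici (0:ℝ), HasDerivAt f (y^5/(1+y)) y := by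
    intro y hy
    have hy0 : (0:ℝ) ≤ y := hy
    have hy1 : (1:ℝ) + y ≠ 0 := by positivity
    have h1 : HasDerivAt (fun y : ℝ => Real.log (1+y)) (1/(1+y)) y := by
      simpa using ((hasDerivAt_id y).const_add 1).log hy1
    have h2 : HasDerivAt (fun y : ℝ => y - y^2/2 + y^3/3 - y^4/4 + y^5/5)
        (1 - y + y^2 - y^3 + y^4) y := by
      have := ((((hasDerivAt_id y).sub ((hasDerivAt_pow 2 y).div_const 2)).add
        ((hasDerivAt_pow 3 y).div_const 3)).sub ((hasDerivAt_pow 4 y).div_const 4)).add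
        ((hasDerivAt_pow 5 y).div_const 5)
      exact this.congr_deriv (by norm_num)
    have := h2.sub h1
    exact this.congr_deriv (by field_simp; ring)
  have mono : MonotoneOn f (Set.Ici 0) := by
    apply monotoneOn_of_deriv_nonneg (convex_Ici 0)
    · exact fun y hy => (key y hy).continuousAt.continuousWithinAt
    · intro y hy
      exact (key y (interior_subset hy)).differentiableAt.differentiableWithinAt
    · intro y hy
      rw [interior_Ici] at hy
      have hy2 : (0:ℝ) < y := hy
      rw [(key y (le_of_lt hy2)).deriv]
      positivity
  have h0 : f 0 = 0 := by simp [hf]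
  have := mono (Set.self_mem_Ici) hx hx
  rw [h0] at this
  simp only [hf] at this
  linarith

lemma poly4_le_log {x : ℝ} (hx : 0 ≤ x) :
    x - x^2/2 + x^3/3 - x^4/4 ≤ Real.log (1 + x) := by
  set f : ℝ → ℝ := fun y => Real.log (1+y) - (y - y^2/2 + y^3/3 - y^4/4) with hf
  have key : ∀ y ∈ Set.Ici (0:ℝ), HasDerivAt f (y^4/(1+y)) y := by
    intro y hy
    have hy0 : (0:ℝ) ≤ y := hy
    have hy1 : (1:ℝ) + y ≠ 0 := by positivity
    have h1 : HasDerivAt (fun y : ℝ => Real.log (1+y)) (1/(1+y)) y := by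
      simpa using ((hasDerivAt_id y).const_add 1).log hy1
    have h2 : HasDerivAt (fun y : ℝ => y - y^2/2 + y^3/3 - y^4/4)
        (1 - y + y^2 - y^3) y := by
      have := (((hasDerivAt_id y).sub ((hasDerivAt_pow 2 y).div_const 2)).add
        ((hasDerivAt_pow 3 y).div_const 3)).sub ((hasDerivAt_pow 4 y).div_const 4)
      exact this.congr_deriv (by norm_num)
    have := h1.sub h2
    exact this.congr_deriv (by field_simp; ring)
  have mono : MonotoneOn f (Set.Ici 0) := by
    apply monotoneOn_of_deriv_nonneg (convex_Ici 0)
    · exact fun y hy => (key y hy).continuousAt.continuousWithinAt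
    · intro y hy
      exact (key y (interior_subset hy)).differentiableAt.differentiableWithinAt
    · intro y hy
      rw [interior_Ici] at hy
      have hy2 : (0:ℝ) < y := hy
      rw [(key y (le_of_lt hy2)).deriv]
      positivity
  have h0 : f 0 = 0 := by simp [hf]
  have := mono (Set.self_mem_Ici) hx hx
  rw [h0] at this
  simp only [hf] at this
  linarith


lemma sqrt_le_num {a b : ℝ} (hb : 0 ≤ b) (h : a ≤ b^2) : Real.sqrt a ≤ b := by
  rw [show b = Real.sqrt (b^2) by rw [Real.sqrt_sq hb]]
  exact Real.sqrt_le_sqrt h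

lemma num_le_sqrt {a b : ℝ} (hb : 0 ≤ b) (h : b^2 ≤ a) : b ≤ Real.sqrt a := by
  rw [show b = Real.sqrt (b^2) by rw [Real.sqrt_sq hb]]
  exact Real.sqrt_le_sqrt h

lemma rpow_half_int (a : ℝ) (ha : 0 < a) (k : ℕ) :
    a ^ ((2*(k:ℝ)+1)/2) = a ^ k * Real.sqrt a := by
  rw [show (2*(k:ℝ)+1)/2 = (k : ℝ) + 1/2 by ring,
    Real.rpow_add ha, Real.rpow_natCast, ← Real.sqrt_eq_rpow]

lemma key_ineq (n : ℕ) (hn : 1 ≤ n) :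
    ((n:ℝ)+2) ^ (((n:ℝ)+2)/2) ≤ Real.exp 1 * ((n:ℝ)+1) * (n:ℝ) ^ ((n:ℝ)/2) := by
  have he := Real.exp_one_gt_d9
  rcases lt_or_ge n 4 with h4 | h4
  · interval_cases n
    · -- n = 1 : 3^(3/2) ≤ 2e
      have h1 : ((1:ℝ)+2) ^ (((1:ℝ)+2)/2) = 3 * Real.sqrt 3 := by
        rw [show ((1:ℝ)+2)/2 = (2*((1:ℕ):ℝ)+1)/2 by norm_num,
          show ((1:ℝ)+2) = 3 by norm_num,
          rpow_half_int 3 (by norm_num) 1]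
        norm_num
      have h2 : (1:ℝ) ^ ((1:ℝ)/2) = 1 := Real.one_rpow _
      push_cast
      rw [h1, h2]
      have s3 : Real.sqrt 3 ≤ 1.7320509 := sqrt_le_num (by norm_num) (by norm_num)
      nlinarith
    · -- n = 2 : 4^2 ≤ 3e·2
      have h1 : ((2:ℝ)+2) ^ (((2:ℝ)+2)/2) = 16 := by
        rw [show ((2:ℝ)+2)/2 = ((2:ℕ):ℝ) by norm_num, Real.rpow_natCast]
        norm_num
      have h2 : (2:ℝ) ^ ((2:ℝ)/2) = 2 := by
        rw [show ((2:ℝ))/2 = ((1:ℕ):ℝ) by norm_num, Real.rpow_natCast]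
        norm_num
      push_cast
      rw [h1, h2]
      nlinarith
    · -- n = 3 : 5^(5/2) ≤ 4e·3^(3/2)
      have h1 : ((3:ℝ)+2) ^ (((3:ℝ)+2)/2) = 25 * Real.sqrt 5 := by
        rw [show ((3:ℝ)+2)/2 = (2*((2:ℕ):ℝ)+1)/2 by norm_num,
          show ((3:ℝ)+2) = 5 by norm_num,
          rpow_half_int 5 (by norm_num) 2]
        norm_num
      have h2 : (3:ℝ) ^ ((3:ℝ)/2) = 3 * Real.sqrt 3 := by
        rw [show ((3:ℝ))/2 = (2*((1:ℕ):ℝ)+1)/2 by norm_num,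
          rpow_half_int 3 (by norm_num) 1]
        norm_num
      push_cast
      rw [h1, h2]
      have s5 : Real.sqrt 5 ≤ 2.2360680 := sqrt_le_num (by norm_num) (by norm_num)
      have s3 : (1.7320508:ℝ) ≤ Real.sqrt 3 := num_le_sqrt (by norm_num) (by norm_num)
      nlinarith
  · -- n ≥ 4
    set x : ℝ := (n : ℝ) with hx
    have hx4 : (4:ℝ) ≤ x := by rw [hx]; exact_mod_cast h4
    have hx0 : (0:ℝ) < x := by linarith
    have hlog2 : Real.log (x+2) = Real.log x + Real.log (1 + 2/x) := by
      rw [← Real.log_mul (ne_of_gt hx0) (by positivity)]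
      congr 1; field_simp
    have hlog1 : Real.log (x+1) = Real.log x + Real.log (1 + 1/x) := by
      rw [← Real.log_mul (ne_of_gt hx0) (by positivity)]
      congr 1; field_simp
    rw [Real.rpow_def_of_pos (by linarith : (0:ℝ) < x + 2),
      Real.rpow_def_of_pos hx0,
      show Real.exp 1 * (x+1) * Real.exp (Real.log x * (x/2))
        = Real.exp (1 + Real.log (x+1) + Real.log x * (x/2)) by
        rw [Real.exp_add, Real.exp_add, Real.exp_log (by linarith : (0:ℝ) < x + 1)]]
    rw [Real.exp_le_exp]
    rw [hlog2, hlog1]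
    -- goal : (log x + log (1+2/x)) * ((x+2)/2) ≤ 1 + (log x + log(1+1/x)) + log x * (x/2)
    have hA := log_le_poly5 (x := 2/x) (by positivity)
    have hB := poly4_le_log (x := 1/x) (by positivity)
    have hmul : Real.log (1 + 2/x) * ((x+2)/2)
        ≤ (2/x - (2/x)^2/2 + (2/x)^3/3 - (2/x)^4/4 + (2/x)^5/5) * ((x+2)/2) :=
      mul_le_mul_of_nonneg_right hA (by linarith)
    have hpoly : (2/x - (2/x)^2/2 + (2/x)^3/3 - (2/x)^4/4 + (2/x)^5/5) * ((x+2)/2)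
        ≤ 1 + (1/x - (1/x)^2/2 + (1/x)^3/3 - (1/x)^4/4) := by
      rw [← sub_nonneg]
      have expand : (1 + (1/x - (1/x)^2/2 + (1/x)^3/3 - (1/x)^4/4))
          - (2/x - (2/x)^2/2 + (2/x)^3/3 - (2/x)^4/4 + (2/x)^5/5) * ((x+2)/2)
          = (10*x^3 - 20*x^2 + 33*x - 384) / (60 * x^5) := by
        field_simp
        ring
      rw [expand]
      apply div_nonneg _ (by positivity)
      nlinarith [sq_nonneg (x-4), mul_nonneg (sq_nonneg (x-4)) hx0.le]
    linarith


noncomputable def g (n : ℕ) : ℝ :=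
  (n : ℝ) ^ ((n : ℝ) / 2) /
    (Real.Gamma (((n : ℝ) + 1) / 2) * Real.sqrt (2 * Real.exp 1) ^ (n - 1))

lemma gamma_pos (n : ℕ) : 0 < Real.Gamma (((n:ℝ)+1)/2) :=
  Real.Gamma_pos_of_pos (by positivity)

lemma sqrt2e_pos : 0 < Real.sqrt (2 * Real.exp 1) :=
  Real.sqrt_pos.mpr (by positivity)

lemma sq_sqrt2e : Real.sqrt (2 * Real.exp 1) ^ 2 = 2 * Real.exp 1 :=
  Real.sq_sqrt (by positivity)

lemma g_pos (n : ℕ) (hn : 1 ≤ n) : 0 < g n := by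
  have h1 : (0:ℝ) < (n:ℝ) := by exact_mod_cast hn
  have h2 := gamma_pos n
  have h3 := sqrt2e_pos
  have h4 : (0:ℝ) < (n:ℝ) ^ ((n:ℝ)/2) := Real.rpow_pos_of_pos h1 _
  unfold g
  positivity

lemma g_step (n : ℕ) (hn : 1 ≤ n) : g (n+2) ≤ g n := by
  have hG := gamma_pos n
  have hs := sqrt2e_pos
  have hn0 : (0:ℝ) < (n:ℝ) := by exact_mod_cast hn
  have hcast : ((n+2:ℕ):ℝ) = (n:ℝ)+2 := by push_cast; ring
  have hΓ2 : Real.Gamma ((((n+2:ℕ):ℝ)+1)/2) = ((n:ℝ)+1)/2 * Real.Gamma (((n:ℝ)+1)/2) := by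
    rw [hcast, show ((n:ℝ)+2+1)/2 = ((n:ℝ)+1)/2 + 1 by ring,
      Real.Gamma_add_one (by positivity)]
  have hpow : Real.sqrt (2 * Real.exp 1) ^ (n+2-1)
      = Real.sqrt (2 * Real.exp 1) ^ (n-1) * (2 * Real.exp 1) := by
    rw [show n+2-1 = (n-1)+2 by omega, pow_add, sq_sqrt2e]
  unfold g
  rw [hΓ2, hpow, hcast]
  set x : ℝ := (n:ℝ)
  set G : ℝ := Real.Gamma ((x+1)/2)
  set S : ℝ := Real.sqrt (2 * Real.exp 1) ^ (n-1)
  have hS : 0 < S := pow_pos hs _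
  have he : (0:ℝ) < Real.exp 1 := Real.exp_pos 1
  rw [div_le_div_iff₀ (by positivity) (by positivity)]
  calc (x+2) ^ ((x+2)/2) * (G * S)
      ≤ (Real.exp 1 * (x+1) * x ^ (x/2)) * (G * S) :=
        mul_le_mul_of_nonneg_right (key_ineq n hn) (by positivity)
    _ = x ^ (x/2) * ((x+1)/2 * G * (S * (2 * Real.exp 1))) := by ring

lemma g_anti (n k : ℕ) (hn : 1 ≤ n) : g (n + 2*k) ≤ g n := by
  induction k with
  | zero => simp
  | succ j ih =>
    have : n + 2*(j+1) = (n + 2*j) + 2 := by ring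
    rw [this]
    exact le_trans (g_step (n+2*j) (by omega)) ih

lemma g_one : g 1 = 1 := by
  unfold g
  norm_num [Real.Gamma_one, Real.one_rpow]

lemma g_two_le : g 2 ≤ 1 := by
  unfold g
  have e1 : (((2:ℕ):ℝ)+1)/2 = 1/2 + 1 := by norm_num
  rw [e1, Real.Gamma_add_one (by norm_num), Real.Gamma_one_half_eq]
  have e2 : ((2:ℕ):ℝ) ^ (((2:ℕ):ℝ)/2) = 2 := by
    rw [show (((2:ℕ):ℝ))/2 = ((1:ℕ):ℝ) by norm_num, Real.rpow_natCast]
    norm_num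
  rw [e2]
  rw [div_le_one (by positivity)]
  have hπ : (0:ℝ) < π := Real.pi_pos
  have key : (4:ℝ) ≤ Real.sqrt π * Real.sqrt (2 * Real.exp 1) := by
    rw [← Real.sqrt_mul hπ.le]
    apply num_le_sqrt (by norm_num)
    nlinarith [Real.pi_gt_d2, Real.exp_one_gt_d9]
  calc (2:ℝ) = 4/2 := by norm_num
    _ ≤ Real.sqrt π * Real.sqrt (2 * Real.exp 1) / 2 := by linarith
    _ = 1/2 * Real.sqrt π * Real.sqrt (2 * Real.exp 1) ^ (2-1) := by
        norm_num; ring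

lemma g_le_one (n : ℕ) (hn : 1 ≤ n) : g n ≤ 1 := by
  rcases Nat.even_or_odd n with ⟨r, hr⟩ | ⟨r, hr⟩
  · have hr1 : 1 ≤ r := by omega
    have : n = 2 + 2*(r-1) := by omega
    rw [this]
    exact le_trans (g_anti 2 (r-1) (by norm_num)) g_two_le
  · have : n = 1 + 2*r := by omega
    rw [this]
    exact le_trans (g_anti 1 r (by norm_num)) (le_of_eq g_one)

lemma Gamma_half (m : ℕ) : Real.Gamma ((m:ℝ) + 1/2)
    = (Nat.factorial (2*m) : ℝ) * Real.sqrt π / (4^m * Nat.factorial m) := by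
  induction m with
  | zero =>
    rw [show ((0:ℕ):ℝ)+1/2 = 1/2 by norm_num, Real.Gamma_one_half_eq]
    simp
  | succ k ih =>
    have e0 : ((k+1:ℕ):ℝ) + 1/2 = ((k:ℝ) + 1/2) + 1 := by push_cast; ring
    rw [e0, Real.Gamma_add_one (by positivity), ih]
    have hk : (Nat.factorial k : ℝ) ≠ 0 := Nat.cast_ne_zero.2 (Nat.factorial_ne_zero k)
    have hk2 : (Nat.factorial (2*k) : ℝ) ≠ 0 := Nat.cast_ne_zero.2 (Nat.factorial_ne_zero _)
    have e1 : (Nat.factorial (2*(k+1)) : ℝ) = (2*(k:ℝ)+2)*(2*(k:ℝ)+1)*Nat.factorial (2*k) := by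
      rw [show 2*(k+1) = (2*k+1)+1 by ring, Nat.factorial_succ, Nat.factorial_succ]
      push_cast; ring
    have e2 : (Nat.factorial (k+1):ℝ) = ((k:ℝ)+1)*Nat.factorial k := by
      rw [Nat.factorial_succ]; push_cast; ring
    rw [e1, e2]
    have h4 : ((4:ℝ))^k ≠ 0 := by positivity
    field_simp
    ring





lemma g_odd_eq (m : ℕ) (hm : 1 ≤ m) :
    g (2*m+1) = (1 + (1/2)/(m:ℝ))^m * Real.sqrt (1 + 1/(2*(m:ℝ)))
      / Stirling.stirlingSeq m := by
  have hm0 : (0:ℝ) < (m:ℝ) := by exact_mod_cast hm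
  unfold g Stirling.stirlingSeq
  have e1 : ((2*m+1:ℕ):ℝ) = 2*(m:ℝ)+1 := by push_cast; ring
  have e2 : ((2*m+1:ℕ):ℝ) ^ (((2*m+1:ℕ):ℝ)/2)
      = (2*(m:ℝ)+1) ^ m * Real.sqrt (2*(m:ℝ)+1) := by
    rw [e1, rpow_half_int _ (by positivity)]
  have e3 : (((2*m+1:ℕ):ℝ)+1)/2 = (m:ℝ) + 1 := by rw [e1]; ring
  have e4 : Real.Gamma ((((2*m+1:ℕ):ℝ)+1)/2) = Nat.factorial m := by
    rw [e3, Real.Gamma_nat_eq_factorial]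
  have e5 : Real.sqrt (2*Real.exp 1) ^ (2*m+1-1) = (2*Real.exp 1)^m := by
    rw [show 2*m+1-1 = 2*m by omega, pow_mul, sq_sqrt2e]
  have e6 : (1:ℝ) + (1/2)/(m:ℝ) = (2*(m:ℝ)+1)/(2*(m:ℝ)) := by field_simp
  have e7 : Real.sqrt (1 + 1/(2*(m:ℝ))) = Real.sqrt (2*(m:ℝ)+1) / Real.sqrt (2*(m:ℝ)) := by
    rw [show (1:ℝ) + 1/(2*(m:ℝ)) = (2*(m:ℝ)+1)/(2*(m:ℝ)) by field_simp,
      Real.sqrt_div (by positivity)]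
  rw [e2, e4, e5, e6, e7]
  have hf : (Nat.factorial m : ℝ) ≠ 0 := Nat.cast_ne_zero.2 (Nat.factorial_ne_zero m)
  have hs2m : Real.sqrt (2*(m:ℝ)) ≠ 0 := by positivity
  have hexp : Real.exp 1 ≠ 0 := Real.exp_ne_zero 1
  rw [div_pow, div_pow]
  field_simp
  ring

lemma g_even_eq (m : ℕ) (hm : 1 ≤ m) :
    g (2*m) = Stirling.stirlingSeq m / Stirling.stirlingSeq (2*m)
      * Real.sqrt (Real.exp 1 / π) := by
  have hm0 : (0:ℝ) < (m:ℝ) := by exact_mod_cast hm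
  have hπ : (0:ℝ) < π := Real.pi_pos
  unfold g Stirling.stirlingSeq
  have e1 : ((2*m:ℕ):ℝ) = 2*(m:ℝ) := by push_cast; ring
  have e2 : ((2*m:ℕ):ℝ) ^ (((2*m:ℕ):ℝ)/2) = (2*(m:ℝ)) ^ m := by
    rw [e1, show (2*(m:ℝ))/2 = ((m:ℕ):ℝ) by push_cast; ring, Real.rpow_natCast]
  have e3 : Real.Gamma ((((2*m:ℕ):ℝ)+1)/2)
      = (Nat.factorial (2*m) : ℝ) * Real.sqrt π / (4^m * Nat.factorial m) := by
    rw [show (((2*m:ℕ):ℝ)+1)/2 = (m:ℝ) + 1/2 by rw [e1]; ring, Gamma_half]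
  -- √(2e)^(2m-1) = (2e)^m / (√2 * √e)
  have hsplit : Real.sqrt (2 * Real.exp 1) = Real.sqrt 2 * Real.sqrt (Real.exp 1) :=
    Real.sqrt_mul (by norm_num) _
  have e5 : Real.sqrt (2*Real.exp 1) ^ (2*m-1) * Real.sqrt (2*Real.exp 1)
      = (2*Real.exp 1)^m := by
    rw [← pow_succ, show 2*m-1+1 = 2*m by omega, pow_mul, sq_sqrt2e]
  have e5' : Real.sqrt (2*Real.exp 1) ^ (2*m-1)
      = (2*Real.exp 1)^m / Real.sqrt (2*Real.exp 1) := by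
    rw [eq_div_iff (by positivity : Real.sqrt (2*Real.exp 1) ≠ 0), e5]
  have e6 : Real.sqrt (2*((2*m:ℕ):ℝ)) = Real.sqrt 2 * Real.sqrt (2*(m:ℝ)) := by
    rw [e1, show (2:ℝ)*(2*(m:ℝ)) = 2*(2*(m:ℝ)) from rfl, Real.sqrt_mul (by norm_num)]
  have e7 : Real.sqrt (Real.exp 1 / π) = Real.sqrt (Real.exp 1) / Real.sqrt π :=
    Real.sqrt_div (Real.exp_pos 1).le _
  have e8 : (((2*m:ℕ):ℝ)/Real.exp 1) ^ (2*m) = ((2*(m:ℝ)/Real.exp 1)^2)^m := by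
    rw [e1, pow_mul]
  rw [e2, e3, e5', e6, e7, e8]
  have hf : (Nat.factorial m : ℝ) ≠ 0 := Nat.cast_ne_zero.2 (Nat.factorial_ne_zero m)
  have hf2 : (Nat.factorial (2*m) : ℝ) ≠ 0 := Nat.cast_ne_zero.2 (Nat.factorial_ne_zero _)
  have hs2m : Real.sqrt (2*(m:ℝ)) ≠ 0 := by positivity
  have hsp : Real.sqrt π ≠ 0 := by positivity
  have hs2 : Real.sqrt 2 ≠ 0 := by positivity
  have hse : Real.sqrt (Real.exp 1) ≠ 0 := by positivity
  have hexp : Real.exp 1 ≠ 0 := Real.exp_ne_zero 1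
  rw [hsplit]
  field_simp
  rw [div_pow, div_pow]
  field_simp
  ring

lemma tendsto_two_mul : Tendsto (fun m : ℕ => 2*m) atTop atTop :=
  tendsto_atTop_atTop.mpr fun b => ⟨b, fun a ha => by omega⟩

lemma sqrt_pi_ne_zero : Real.sqrt π ≠ 0 := by positivity

lemma tendsto_g_even : Tendsto (fun m => g (2*m)) atTop (𝓝 (Real.sqrt (Real.exp 1 / π))) := by
  have hs := Stirling.tendsto_stirlingSeq_sqrt_pi
  have h2 : Tendsto (fun m : ℕ => Stirling.stirlingSeq (2*m)) atTop (𝓝 (Real.sqrt π)) :=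
    hs.comp tendsto_two_mul
  have hmain : Tendsto (fun m : ℕ => Stirling.stirlingSeq m / Stirling.stirlingSeq (2*m)
      * Real.sqrt (Real.exp 1 / π)) atTop
      (𝓝 (Real.sqrt π / Real.sqrt π * Real.sqrt (Real.exp 1 / π))) :=
    ((hs.div h2 sqrt_pi_ne_zero).mul tendsto_const_nhds)
  rw [div_self sqrt_pi_ne_zero, one_mul] at hmain
  apply hmain.congr'
  filter_upwards [eventually_ge_atTop 1] with m hm
  exact (g_even_eq m hm).symm

lemma tendsto_g_odd : Tendsto (fun m => g (2*m+1)) atTop (𝓝 (Real.sqrt (Real.exp 1 / π))) := by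
  have h1 : Tendsto (fun m : ℕ => (1 + (1/2)/(m:ℝ))^m) atTop (𝓝 (Real.exp (1/2))) :=
    Real.tendsto_one_add_div_pow_exp (1/2)
  have h2 : Tendsto (fun m : ℕ => Real.sqrt (1 + 1/(2*(m:ℝ)))) atTop (𝓝 1) := by
    have hb : Tendsto (fun m : ℕ => 1 + 1/(2*(m:ℝ))) atTop (𝓝 1) := by
      have : Tendsto (fun m : ℕ => 1/(2*(m:ℝ))) atTop (𝓝 0) := by
        have := tendsto_one_div_atTop_nhds_zero_nat.const_mul (1/2 : ℝ)
        rw [mul_zero] at this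
        apply this.congr
        intro m; field_simp
      simpa using tendsto_const_nhds.add this
    have := (Real.continuous_sqrt.continuousAt (x := (1:ℝ))).tendsto.comp hb
    simpa [Function.comp_def] using this
  have h3 := Stirling.tendsto_stirlingSeq_sqrt_pi
  have hmain : Tendsto (fun m : ℕ => (1 + (1/2)/(m:ℝ))^m * Real.sqrt (1 + 1/(2*(m:ℝ)))
      / Stirling.stirlingSeq m) atTop
      (𝓝 (Real.exp (1/2) * 1 / Real.sqrt π)) :=
    (h1.mul h2).div h3 sqrt_pi_ne_zero
  have heq : Real.exp (1/2) * 1 / Real.sqrt π = Real.sqrt (Real.exp 1 / π) := by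
    rw [mul_one, Real.sqrt_div (Real.exp_pos 1).le, show (1:ℝ)/2 = 1/2 from rfl,
      Real.exp_half]
  rw [heq] at hmain
  apply hmain.congr'
  filter_upwards [eventually_ge_atTop 1] with m hm
  exact (g_odd_eq m hm).symm

lemma sqrt_epi_le_g (n : ℕ) (hn : 1 ≤ n) : Real.sqrt (Real.exp 1 / π) ≤ g n := by
  rcases Nat.even_or_odd n with ⟨r, hr⟩ | ⟨r, hr⟩
  · have ht : Tendsto (fun k : ℕ => g (2*(k+r))) atTop (𝓝 (Real.sqrt (Real.exp 1 / π))) :=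
      tendsto_g_even.comp (tendsto_add_atTop_nat r)
    apply le_of_tendsto ht
    filter_upwards with k
    have : 2*(k+r) = n + 2*k := by omega
    rw [this]
    exact g_anti n k hn
  · have ht : Tendsto (fun k : ℕ => g (2*(k+r)+1)) atTop (𝓝 (Real.sqrt (Real.exp 1 / π))) :=
      tendsto_g_odd.comp (tendsto_add_atTop_nat r)
    apply le_of_tendsto ht
    filter_upwards with k
    have : 2*(k+r)+1 = n + 2*k := by omega
    rw [this]
    exact g_anti n k hn


/-- For every n ≥ 1, √(e/π) ≤ n^{n/2}/(Γ((n+1)/2)·(√(2e))^{n-1}) ≤ 1,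
with the upper bound attained at n = 1. -/
theorem stmt1 (n : ℕ) (hn : 1 ≤ n) :
    Real.sqrt (Real.exp 1 / Real.pi) ≤
        (n : ℝ) ^ ((n : ℝ) / 2) /
          (Real.Gamma (((n : ℝ) + 1) / 2) * Real.sqrt (2 * Real.exp 1) ^ (n - 1)) ∧
      (n : ℝ) ^ ((n : ℝ) / 2) /
          (Real.Gamma (((n : ℝ) + 1) / 2) * Real.sqrt (2 * Real.exp 1) ^ (n - 1)) ≤ 1 ∧
      (n = 1 →
        (n : ℝ) ^ ((n : ℝ) / 2) /
          (Real.Gamma (((n : ℝ) + 1) / 2) * Real.sqrt (2 * Real.exp 1) ^ (n - 1)) = 1) := by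
  refine ⟨sqrt_epi_le_g n hn, g_le_one n hn, fun h => ?_⟩
  subst h
  exact g_one
end

section
/- The infinite product ∏_{n=1}^∞ (1 − z/(π² n²)) converges for every complex z and equals sin(√z)/√z (interpreted as the entire function ∑_{k=0}^∞ (−1)^k z^k/(2k+1)!). -/
open Filter Topology

private lemma stmt9_sum_norm_a (z : ℂ) :
    Summable (fun n : ℕ => ‖z / ((Real.pi : ℂ) ^ 2 * ((n : ℂ) + 1) ^ 2)‖) := by
  have h1 : Summable (fun n : ℕ => 1 / ((n:ℝ)+1) ^ 2) := by
    have := (summable_nat_add_iff 1).mpr (Real.summable_one_div_nat_pow.mpr one_lt_two)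
    exact this.congr (by intro n; push_cast; ring_nf)
  apply (h1.mul_left (‖z‖ / Real.pi ^ 2)).congr
  intro n
  have hn : ((n:ℂ)+1) = ((n:ℝ)+1 : ℝ) := by push_cast; ring
  rw [norm_div, norm_mul, norm_pow, norm_pow, hn, Complex.norm_real, Complex.norm_real,
    Real.norm_eq_abs, Real.norm_eq_abs, abs_of_pos Real.pi_pos, abs_of_pos (by positivity)]
  field_simp

private lemma stmt9_log_summable (z : ℂ) :
    Summable (fun n : ℕ => Complex.log (1 - z / ((Real.pi : ℂ) ^ 2 * ((n : ℂ) + 1) ^ 2))) := by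
  set a : ℕ → ℂ := fun n => z / ((Real.pi : ℂ) ^ 2 * ((n : ℂ) + 1) ^ 2) with ha
  have hs := stmt9_sum_norm_a z
  apply (hs.mul_left (3/2)).of_norm_bounded_eventually_nat
  have h0 : Tendsto (fun n => ‖a n‖) atTop (𝓝 0) := hs.tendsto_atTop_zero
  filter_upwards [h0.eventually_le_const (by norm_num : (0:ℝ) < 1/2)] with n hn
  have h1 : (1 : ℂ) - a n = 1 + (-(a n)) := by ring
  rw [h1]
  calc ‖Complex.log (1 + -(a n))‖ ≤ 3/2 * ‖-(a n)‖ :=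
        Complex.norm_log_one_add_half_le_self (by rwa [norm_neg])
    _ = 3/2 * ‖a n‖ := by rw [norm_neg]

/-- The infinite product ∏_{n≥1} (1 - z/(π²n²)) converges for every complex z and equals
the entire function sin(√z)/√z = ∑_{k≥0} (-1)^k z^k/(2k+1)!. -/
theorem stmt9 (z : ℂ) :
    HasProd (fun n : ℕ => 1 - z / ((Real.pi : ℂ) ^ 2 * ((n : ℂ) + 1) ^ 2))
      (∑' k : ℕ, (-1) ^ k * z ^ k / (Nat.factorial (2 * k + 1) : ℂ)) := by
  set f : ℕ → ℂ := fun n => 1 - z / ((Real.pi : ℂ) ^ 2 * ((n : ℂ) + 1) ^ 2) with hf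
  by_cases hz : z = 0
  · subst hz
    have h1 : f = fun _ => 1 := by ext n; simp [hf]
    have h2 : (∑' k : ℕ, ((-1) ^ k * (0:ℂ) ^ k / (Nat.factorial (2 * k + 1) : ℂ))) = 1 := by
      rw [tsum_eq_single 0 (by intro k hk; simp [zero_pow hk])]
      simp
    rw [h1, h2]
    exact hasProd_one
  obtain ⟨w, hw⟩ : ∃ w : ℂ, w ^ 2 = z / (Real.pi : ℂ) ^ 2 :=
    ⟨(z / (Real.pi : ℂ) ^ 2) ^ ((2:ℕ):ℂ)⁻¹, by
      exact_mod_cast Complex.cpow_nat_inv_pow _ two_ne_zero⟩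
  have hπ : (Real.pi : ℂ) ≠ 0 := Complex.ofReal_ne_zero.mpr Real.pi_ne_zero
  have hzw : z = (Real.pi : ℂ) ^ 2 * w ^ 2 := by
    rw [hw]; field_simp
  have hwne : w ≠ 0 := by
    intro h; apply hz; rw [hzw, h]; ring
  have hπw : (Real.pi : ℂ) * w ≠ 0 := mul_ne_zero hπ hwne
  have hterm : ∀ n : ℕ, f n = 1 - w ^ 2 / ((n : ℂ) + 1) ^ 2 := by
    intro n
    rw [hf]
    simp only
    rw [hzw, mul_div_mul_left _ _ (pow_ne_zero 2 hπ)]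
  have hT : Tendsto (fun n : ℕ => ∏ j ∈ Finset.range n, f j) atTop
      (𝓝 (Complex.sin ((Real.pi : ℂ) * w) / ((Real.pi : ℂ) * w))) := by
    have h := (Complex.tendsto_euler_sin_prod w).div_const ((Real.pi : ℂ) * w)
    apply h.congr
    intro n
    rw [mul_comm ((Real.pi : ℂ) * w), mul_div_assoc, div_self hπw, mul_one]
    exact (Finset.prod_congr rfl fun j _ => (hterm j).symm)
  have hS : HasSum (fun k : ℕ => (-1) ^ k * z ^ k / (Nat.factorial (2 * k + 1) : ℂ))
      (Complex.sin ((Real.pi : ℂ) * w) / ((Real.pi : ℂ) * w)) := by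
    have h := (Complex.hasSum_sin ((Real.pi : ℂ) * w)).div_const ((Real.pi : ℂ) * w)
    have heq : ∀ k : ℕ, (-1:ℂ)^k * ((Real.pi:ℂ)*w)^(2*k+1)/((Nat.factorial (2*k+1)) : ℂ)/((Real.pi:ℂ)*w)
        = (-1)^k * z^k/((Nat.factorial (2*k+1)) : ℂ) := by
      intro k
      have hzk : z ^ k = ((Real.pi:ℂ)*w)^(2*k) := by
        rw [hzw, ← mul_pow, ← pow_mul]
      rw [hzk, pow_succ]
      calc (-1:ℂ)^k * (((Real.pi:ℂ)*w)^(2*k) * ((Real.pi:ℂ)*w))/((Nat.factorial (2*k+1)) : ℂ)/((Real.pi:ℂ)*w)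
          = (-1:ℂ)^k * ((Real.pi:ℂ)*w)^(2*k)/((Nat.factorial (2*k+1)) : ℂ) * (((Real.pi:ℂ)*w)/((Real.pi:ℂ)*w)) := by
            ring
        _ = (-1:ℂ)^k * ((Real.pi:ℂ)*w)^(2*k)/((Nat.factorial (2*k+1)) : ℂ) := by
            rw [div_self hπw, mul_one]
    exact (funext heq) ▸ h
  rw [hS.tsum_eq]
  by_cases hzero : ∃ n, f n = 0
  · obtain ⟨n₀, h0⟩ := hzero
    have hp0 : HasProd f 0 := by
      rw [HasProd]
      refine Tendsto.congr' ?_ tendsto_const_nhds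
      filter_upwards [Filter.eventually_ge_atTop ({n₀} : Finset ℕ)] with s hs
      exact (Finset.prod_eq_zero (hs (Finset.mem_singleton_self n₀)) h0).symm
    have := tendsto_nhds_unique hT hp0.tendsto_prod_nat
    rw [this]
    exact hp0
  · push_neg at hzero
    have hm : HasProd f (∏' n, f n) :=
      (Complex.multipliable_of_summable_log (stmt9_log_summable z)).hasProd
    have := tendsto_nhds_unique hm.tendsto_prod_nat hT
    rw [← this]
    exact hm
end

section
/- The Airy kernel factorization: for all real x, y, (Ai(x)Ai'(y) − Ai(y)Ai'(x))/(x−y) = ∫₀^∞ Ai(x+ξ) Ai(y+ξ) dξ, where Ai is the Airy function (and the left-hand side is interpreted as Ai'(x)Ai'(x) − x·Ai(x)² ... i.e. its continuous extension when x = y). -/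
open MeasureTheory Filter Set Topology

/-- Airy kernel factorization: for any solution Ai of the Airy ODE Ai'' = x·Ai that,
together with its derivative, decays at +∞ (so that the integrals converge),
(Ai(x)Ai'(y) - Ai(y)Ai'(x))/(x-y) = ∫₀^∞ Ai(x+ξ)Ai(y+ξ) dξ, with the continuous
extension Ai'(x)² - x·Ai(x)² on the diagonal. -/
theorem stmt17 (Ai Ai' : ℝ → ℝ)
    (hderiv : ∀ x, HasDerivAt Ai (Ai' x) x)
    (hderiv' : ∀ x, HasDerivAt Ai' (x * Ai x) x)
    (hlim : Filter.Tendsto Ai Filter.atTop (nhds 0))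
    (hlim' : Filter.Tendsto Ai' Filter.atTop (nhds 0))
    (hint : ∀ x y : ℝ,
      MeasureTheory.IntegrableOn (fun ξ => Ai (x + ξ) * Ai (y + ξ)) (Set.Ioi 0)) :
    ∀ x y : ℝ,
      (x ≠ y →
        (Ai x * Ai' y - Ai y * Ai' x) / (x - y)
          = ∫ ξ in Set.Ioi (0:ℝ), Ai (x + ξ) * Ai (y + ξ)) ∧
      (Ai' x ^ 2 - x * Ai x ^ 2 = ∫ ξ in Set.Ioi (0:ℝ), Ai (x + ξ) ^ 2) := by
  -- derivative helpers
  have dAi : ∀ (x ξ : ℝ), HasDerivAt (fun t => Ai (x + t)) (Ai' (x + ξ)) ξ := by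
    intro x ξ
    have h := (hderiv (x + ξ)).comp ξ ((hasDerivAt_id ξ).const_add x)
    rw [mul_one] at h
    exact h
  have dAi' : ∀ (x ξ : ℝ), HasDerivAt (fun t => Ai' (x + t)) ((x + ξ) * Ai (x + ξ)) ξ := by
    intro x ξ
    have h := (hderiv' (x + ξ)).comp ξ ((hasDerivAt_id ξ).const_add x)
    rw [mul_one] at h
    exact h
  have tendAi : ∀ x : ℝ, Tendsto (fun t => Ai (x + t)) atTop (𝓝 0) := fun x =>
    hlim.comp (tendsto_atTop_add_const_left _ x tendsto_id)
  have tendAi' : ∀ x : ℝ, Tendsto (fun t => Ai' (x + t)) atTop (𝓝 0) := fun x =>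
    hlim'.comp (tendsto_atTop_add_const_left _ x tendsto_id)
  intro x y
  constructor
  · -- off-diagonal
    intro hxy
    have hxy' : x - y ≠ 0 := sub_ne_zero.mpr hxy
    set f : ℝ → ℝ := fun ξ =>
      (Ai (y + ξ) * Ai' (x + ξ) - Ai (x + ξ) * Ai' (y + ξ)) / (x - y) with hf
    have hd : ∀ ξ ∈ Ici (0:ℝ), HasDerivAt f (Ai (x + ξ) * Ai (y + ξ)) ξ := by
      intro ξ _
      have h1 : HasDerivAt (fun t => Ai (y + t) * Ai' (x + t) - Ai (x + t) * Ai' (y + t))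
          ((Ai' (y + ξ) * Ai' (x + ξ) + Ai (y + ξ) * ((x + ξ) * Ai (x + ξ))) -
           (Ai' (x + ξ) * Ai' (y + ξ) + Ai (x + ξ) * ((y + ξ) * Ai (y + ξ)))) ξ :=
        ((dAi y ξ).mul (dAi' x ξ)).sub ((dAi x ξ).mul (dAi' y ξ))
      have := h1.div_const (x - y)
      refine this.congr_deriv ?_
      rw [div_eq_iff hxy']
      ring
    have htend : Tendsto f atTop (𝓝 0) := by
      have : Tendsto (fun ξ => (Ai (y + ξ) * Ai' (x + ξ) - Ai (x + ξ) * Ai' (y + ξ)) / (x - y))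
          atTop (𝓝 ((0 * 0 - 0 * 0) / (x - y))) :=
        (((tendAi y).mul (tendAi' x)).sub ((tendAi x).mul (tendAi' y))).div_const _
      simpa using this
    have := integral_Ioi_of_hasDerivAt_of_tendsto' hd (hint x y) htend
    rw [this]
    simp only [hf, add_zero]
    field_simp
    ring
  · -- diagonal
    have hintx : IntegrableOn (fun ξ => Ai (x + ξ) ^ 2) (Ioi (0:ℝ)) := by
      simpa [pow_two] using hint x x
    set f : ℝ → ℝ := fun ξ => (x + ξ) * Ai (x + ξ) ^ 2 - Ai' (x + ξ) ^ 2 with hf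
    have hd : ∀ ξ ∈ Ici (0:ℝ), HasDerivAt f (Ai (x + ξ) ^ 2) ξ := by
      intro ξ _
      have hx1 : HasDerivAt (fun t : ℝ => x + t) 1 ξ := (hasDerivAt_id ξ).const_add x
      have h1 : HasDerivAt (fun t => (x + t) * Ai (x + t) ^ 2)
          (1 * Ai (x + ξ) ^ 2 + (x + ξ) * (2 * Ai (x + ξ) ^ 1 * Ai' (x + ξ))) ξ :=
        hx1.mul ((dAi x ξ).pow 2)
      have h2 : HasDerivAt (fun t => Ai' (x + t) ^ 2)
          (2 * Ai' (x + ξ) ^ 1 * ((x + ξ) * Ai (x + ξ))) ξ := (dAi' x ξ).pow 2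
      have := h1.sub h2
      refine this.congr_deriv ?_
      ring
    -- f has a limit M at infinity
    have hdIoi : ∀ ξ ∈ Ioi (0:ℝ), HasDerivAt f (Ai (x + ξ) ^ 2) ξ := fun ξ hξ => hd ξ (mem_Ioi.mp hξ).le
    have htend : Tendsto f atTop (𝓝 (limUnder atTop f)) :=
      tendsto_limUnder_of_hasDerivAt_of_integrableOn_Ioi hdIoi hintx
    set M := limUnder atTop f with hM
    -- (x+ξ)Ai(x+ξ)² → M
    have htend2 : Tendsto (fun ξ => (x + ξ) * Ai (x + ξ) ^ 2) atTop (𝓝 M) := by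
      have : Tendsto (fun ξ => f ξ + Ai' (x + ξ) ^ 2) atTop (𝓝 (M + 0 ^ 2)) :=
        htend.add ((tendAi' x).pow 2)
      simpa [hf] using this
    -- M ≥ 0
    have hM0 : 0 ≤ M := by
      refine ge_of_tendsto htend2 ?_
      filter_upwards [eventually_ge_atTop (-x)] with ξ hξ
      have : (0:ℝ) ≤ x + ξ := by linarith
      positivity
    -- M = 0 by integrability
    have hMeq : M = 0 := by
      by_contra hne
      have hMpos : 0 < M := lt_of_le_of_ne hM0 (Ne.symm hne)
      have h1 : ∀ᶠ ξ in atTop, M / 2 < (x + ξ) * Ai (x + ξ) ^ 2 :=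
        htend2.eventually (eventually_gt_nhds (by linarith))
      have hev : ∀ᶠ ξ in atTop, M / 4 * ξ⁻¹ ≤ Ai (x + ξ) ^ 2 := by
        filter_upwards [h1, eventually_ge_atTop (max 1 |x|)] with ξ h₁ h₂
        have hξ1 : (1:ℝ) ≤ ξ := le_trans (le_max_left _ _) h₂
        have hξpos : (0:ℝ) < ξ := lt_of_lt_of_le one_pos hξ1
        have hA : (0:ℝ) ≤ Ai (x + ξ) ^ 2 := sq_nonneg _
        have h2 : x + ξ ≤ 2 * ξ := by
          have := le_abs_self x
          have := le_trans (le_max_right 1 |x|) h₂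
          linarith
        have h3 : M / 2 < 2 * ξ * Ai (x + ξ) ^ 2 :=
          lt_of_lt_of_le h₁ (mul_le_mul_of_nonneg_right h2 hA)
        rw [mul_inv_le_iff₀' hξpos]
        nlinarith
      obtain ⟨T₀, hT₀⟩ := eventually_atTop.mp hev
      set T := max T₀ 1 with hT
      have hT1 : (1:ℝ) ≤ T := le_max_right _ _
      have hTpos : (0:ℝ) < T := lt_of_lt_of_le one_pos hT1
      have hIntT : IntegrableOn (fun ξ => Ai (x + ξ) ^ 2) (Ioi T) volume :=
        hintx.mono_set (Ioi_subset_Ioi hTpos.le)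
      have hInt2 : IntegrableOn (fun ξ => M / 4 * ξ⁻¹) (Ioi T) volume := by
        refine Integrable.mono hIntT
          ((measurable_inv.comp measurable_id).const_mul (M / 4)).aestronglyMeasurable ?_
        rw [ae_restrict_iff' measurableSet_Ioi]
        refine MeasureTheory.ae_of_all _ fun ξ hξ => ?_
        have hξT : T ≤ ξ := (le_of_lt hξ)
        have hb := hT₀ ξ (le_trans (le_max_left _ _) hξT)
        have hξpos : (0:ℝ) < ξ := lt_of_lt_of_le hTpos hξT
        have h0 : (0:ℝ) ≤ M / 4 * ξ⁻¹ := by positivity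
        rw [Real.norm_eq_abs, Real.norm_eq_abs, abs_of_nonneg h0, abs_of_nonneg (sq_nonneg _)]
        exact hb
      have hInv : IntegrableOn (fun ξ : ℝ => ξ⁻¹) (Ioi T) volume := by
        have h := hInt2.const_mul ((M / 4)⁻¹)
        have hM4 : (M / 4) ≠ 0 := by positivity
        have heq : (fun ξ : ℝ => (M / 4)⁻¹ * (M / 4 * ξ⁻¹)) = fun ξ : ℝ => ξ⁻¹ := by
          funext ξ; rw [← mul_assoc, inv_mul_cancel₀ hM4, one_mul]
        rwa [heq] at h
      have : IntegrableOn (fun ξ : ℝ => ξ ^ (-1 : ℝ)) (Ioi T) volume := by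
        refine hInv.congr_fun (fun ξ hξ => ?_) measurableSet_Ioi
        rw [Real.rpow_neg_one]
      rw [integrableOn_Ioi_rpow_iff hTpos] at this
      linarith
    have := integral_Ioi_of_hasDerivAt_of_tendsto' hd hintx htend
    rw [this, hMeq]
    simp only [hf, add_zero, zero_sub, neg_sub]
end
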